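/- Under the Setup with Hypotheses (H2) and (H3), the S-value function w ↦ α_w on adh(L) is uniformly continuous for the prefix metric: for every ε > 0 there exists ℓ ∈ ℕ such that for all w, z ∈ adh(L) agreeing on their first ℓ letters, |α_w − α_z| ≤ ε. -/

import Mathlib

open Filter Topology

/-- The prefix of length `ℓ` of an infinite word `w : ℕ → A`. -/
def prefixOf {A : Type*} (w : ℕ → A) (ℓ : ℕ) : List A := List.ofFn (fun i : Fin ℓ => w i)

/-- The set of prefixes of words of a language `L`. -/
def pref {A : Type*} (L : Set (List A)) : Set (List A) := {u | ∃ v ∈ L, u <+: v}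

/-- The adherence of a language. -/
def adh {A : Type*} (L : Set (List A)) : Set (ℕ → A) :=
  {w | ∀ ℓ : ℕ, prefixOf w ℓ ∈ pref L}

/-- The center of a language: the finite prefixes of elements of the adherence. -/
def centre {A : Type*} (L : Set (List A)) : Set (List A) :=
  {u | ∃ w ∈ adh L, u = prefixOf w u.length}

/-- Transition function of a deterministic automaton extended to words. -/
def deltaStar {Q A : Type*} (δ : Q → A → Q) (q : Q) (w : List A) : Q := w.foldl δ q

/-- `ucomp δ F q n` : number of words of length `n` accepted from state `q`. -/
noncomputable def ucomp {Q A : Type*} (δ : Q → A → Q) (F : Set Q) (q : Q) (n : ℕ) : ℕ :=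
  {z : List A | z.length = n ∧ deltaStar δ q z ∈ F}.ncard

/-- `vcomp δ F q n` : number of words of length at most `n` accepted from state `q`. -/
noncomputable def vcomp {Q A : Type*} (δ : Q → A → Q) (F : Set Q) (q : Q) (n : ℕ) : ℕ :=
  ∑ m ∈ Finset.range (n + 1), ucomp δ F q m

open scoped Classical in
/-- For a word `y`, `alphaFin L r y = s₀ + Σ_{x ∈ centre(L), |x| = |y|, x <_lex y} r x`
where `s₀ = 1 - r ε`.  (Words of length `|y|` are enumerated as `List.ofFn f`
for `f : Fin |y| → A`.) -/
noncomputable def alphaFin {A : Type*} [Fintype A] [LinearOrder A]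
    (L : Set (List A)) (r : List A → ℝ) (y : List A) : ℝ :=
  (1 - r []) +
    ∑ f : Fin y.length → A,
      if List.ofFn f ∈ centre L ∧ List.Lex (· < ·) (List.ofFn f) y then r (List.ofFn f)
      else 0


section Helpers

variable {Γ : Type*} [Fintype Γ] [LinearOrder Γ]

lemma length_prefixOf (w : ℕ → Γ) (n : ℕ) : (prefixOf w n).length = n := by simp [prefixOf]

lemma prefixOf_succ (w : ℕ → Γ) (k : ℕ) :
    prefixOf w (k + 1) = prefixOf w k ++ [w k] := by
  rw [prefixOf, List.ofFn_succ', List.concat_eq_append, prefixOf]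
  simp

lemma prefixOf_prefix (w : ℕ → Γ) {m n : ℕ} (h : m ≤ n) : prefixOf w m <+: prefixOf w n := by
  induction n with
  | zero => have : m = 0 := by omega
            subst this; exact List.prefix_refl _
  | succ n ih =>
    rcases Nat.lt_or_ge m (n + 1) with h' | h'
    · exact (ih (by omega)).trans (by rw [prefixOf_succ]; exact List.prefix_append _ _)
    · have : m = n + 1 := by omega
      subst this; exact List.prefix_refl _

lemma eq_prefixOf_of_prefix {w : ℕ → Γ} {u : List Γ} {n : ℕ} (h : u <+: prefixOf w n) :
    u = prefixOf w u.length := by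
  have hlen : u.length ≤ n := by simpa [length_prefixOf] using h.length_le
  have h2 : prefixOf w u.length <+: prefixOf w n := prefixOf_prefix w hlen
  rw [List.prefix_iff_eq_take] at h h2
  rw [length_prefixOf] at h2
  conv_lhs => rw [h]
  rw [h2]

lemma centre_prefix_closed {L : Set (List Γ)} {u v : List Γ} (huv : u <+: v)
    (hv : v ∈ centre L) : u ∈ centre L := by
  obtain ⟨w, hw, hveq⟩ := hv
  exact ⟨w, hw, eq_prefixOf_of_prefix (hveq ▸ huv)⟩

lemma prefixOf_mem_centre {L : Set (List Γ)} {w : ℕ → Γ} (hw : w ∈ adh L) (n : ℕ) :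
    prefixOf w n ∈ centre L := ⟨w, hw, by rw [length_prefixOf]⟩

lemma centre_subset_pref {L : Set (List Γ)} : centre L ⊆ pref L := by
  rintro y ⟨w, hw, hy⟩
  rw [hy]; exact hw _

lemma koenig {T : Set (List Γ)} (hcl : ∀ u v : List Γ, u <+: v → v ∈ T → u ∈ T)
    (hinf : T.Infinite) : ∃ w : ℕ → Γ, ∀ n, prefixOf w n ∈ T := by
  classical
  haveI : Nonempty Γ := by
    obtain ⟨v, hv⟩ := (hinf.diff (Set.finite_singleton ([] : List Γ))).nonempty
    cases v with
    | nil => exact absurd rfl hv.2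
    | cons c t => exact ⟨c⟩
  set P : List Γ → Prop := fun u => {v ∈ T | u <+: v}.Infinite with hP
  have hstep : ∀ u, P u → ∃ a, P (u ++ [a]) := by
    intro u hu
    by_contra hcon
    push_neg at hcon
    have hfin : ∀ a, {v ∈ T | u ++ [a] <+: v}.Finite := fun a => Set.not_infinite.mp (hcon a)
    refine Set.not_infinite.mpr (Set.Finite.subset ((Set.finite_iUnion hfin).insert u) ?_) hu
    rintro v ⟨hvT, t, rfl⟩
    cases t with
    | nil => simp
    | cons b t' =>
      refine Set.mem_insert_iff.mpr (Or.inr (Set.mem_iUnion.mpr ⟨b, hvT, ⟨t', by simp⟩⟩))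
  let pick : List Γ → Γ := fun u => if h : ∃ a, P (u ++ [a]) then h.choose else Classical.arbitrary Γ
  let f : ℕ → List Γ := fun n => Nat.rec [] (fun _ u => u ++ [pick u]) n
  have hfs : ∀ n, f (n + 1) = f n ++ [pick (f n)] := fun n => rfl
  have hPf : ∀ n, P (f n) := by
    intro n; induction n with
    | zero =>
      have : {v ∈ T | [] <+: v} = T := by ext v; simp
      show ({v ∈ T | [] <+: v}).Infinite
      rw [this]; exact hinf
    | succ n ih =>
      have hex : ∃ a, P (f n ++ [a]) := hstep _ ih
      have hp : pick (f n) = hex.choose := dif_pos hex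
      rw [hfs, hp]; exact hex.choose_spec
  refine ⟨fun n => pick (f n), fun n => ?_⟩
  have hpre : ∀ n, prefixOf (fun n => pick (f n)) n = f n := by
    intro n; induction n with
    | zero => simp [prefixOf]; rfl
    | succ n ih => rw [prefixOf_succ, ih, hfs]
  rw [hpre]
  obtain ⟨v, hvT, hpre'⟩ := (hPf n).nonempty
  exact hcl _ _ hpre' hvT

end Helpers

section Counting

variable {Γ : Type*} [Fintype Γ] [LinearOrder Γ]
variable {Q : Type*}

lemma deltaStar_append (δ : Q → Γ → Q) (q : Q) (x z : List Γ) :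
    deltaStar δ q (x ++ z) = deltaStar δ (deltaStar δ q x) z := by
  simp [deltaStar]

open Classical in
lemma ucomp_eq (δ : Q → Γ → Q) (F : Set Q) (q : Q) (n : ℕ) :
    ucomp δ F q n = ∑ f : Fin n → Γ, if deltaStar δ q (List.ofFn f) ∈ F then 1 else 0 := by
  have hset : {z : List Γ | z.length = n ∧ deltaStar δ q z ∈ F}
      = List.ofFn '' {f : Fin n → Γ | deltaStar δ q (List.ofFn f) ∈ F} := by
    ext z
    constructor
    · rintro ⟨hl, hz⟩
      subst hl
      exact ⟨z.get, by rw [Set.mem_setOf_eq, List.ofFn_get]; exact hz, List.ofFn_get z⟩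
    · rintro ⟨f, hf, rfl⟩
      exact ⟨by simp, hf⟩
  rw [ucomp, hset, Set.ncard_image_of_injective _ List.ofFn_injective,
    Set.ncard_eq_toFinset_card', Set.toFinset_setOf, Finset.card_filter]

lemma ofFn_cons {n : ℕ} (a : Γ) (f : Fin n → Γ) :
    List.ofFn (Fin.cons a f : Fin (n + 1) → Γ) = a :: List.ofFn f := by
  rw [List.ofFn_succ]
  simp

open Classical in
lemma ucomp_succ (δ : Q → Γ → Q) (F : Set Q) (q : Q) (m : ℕ) :
    ucomp δ F q (m + 1) = ∑ a : Γ, ucomp δ F (δ q a) m := by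
  calc ucomp δ F q (m + 1)
      = ∑ g : Fin (m + 1) → Γ, if deltaStar δ q (List.ofFn g) ∈ F then 1 else 0 :=
        ucomp_eq δ F q (m + 1)
    _ = ∑ p : Γ × (Fin m → Γ),
          if deltaStar δ q (List.ofFn (Fin.cons p.1 p.2 : Fin (m+1) → Γ)) ∈ F then 1 else 0 :=
        (Fintype.sum_equiv (Fin.consEquiv fun _ => Γ) _ _ fun p => rfl).symm
    _ = ∑ a : Γ, ∑ f : Fin m → Γ,
          if deltaStar δ (δ q a) (List.ofFn f) ∈ F then 1 else 0 := by
        rw [Fintype.sum_prod_type]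
        refine Finset.sum_congr rfl fun a _ => Finset.sum_congr rfl fun f _ => ?_
        rw [ofFn_cons]
        rfl
    _ = ∑ a : Γ, ucomp δ F (δ q a) m := by
        refine Finset.sum_congr rfl fun a _ => (ucomp_eq δ F (δ q a) m).symm

end Counting

section RLemmas

open Filter Topology

variable {Γ : Type*} [Fintype Γ] [LinearOrder Γ]
variable {Q : Type*} {q0 : Q} {δ : Q → Γ → Q} {F : Set Q} {r : List Γ → ℝ}

lemma rnonneg
    (hH2 : ∀ x : List Γ,
      Tendsto (fun n : ℕ =>
          (ucomp δ F (deltaStar δ q0 x) (n - x.length) : ℝ) / (vcomp δ F q0 n : ℝ))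
        atTop (𝓝 (r x)))
    (x : List Γ) : 0 ≤ r x :=
  ge_of_tendsto' (hH2 x) fun n => by positivity

lemma radd
    (hH2 : ∀ x : List Γ,
      Tendsto (fun n : ℕ =>
          (ucomp δ F (deltaStar δ q0 x) (n - x.length) : ℝ) / (vcomp δ F q0 n : ℝ))
        atTop (𝓝 (r x)))
    (x : List Γ) : r x = ∑ a : Γ, r (x ++ [a]) := by
  have h2 : Tendsto (fun n : ℕ => ∑ a : Γ,
      (ucomp δ F (deltaStar δ q0 (x ++ [a])) (n - (x ++ [a]).length) : ℝ) /
        (vcomp δ F q0 n : ℝ)) atTop (𝓝 (∑ a : Γ, r (x ++ [a]))) :=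
    tendsto_finset_sum _ fun a _ => hH2 (x ++ [a])
  have hev : (fun n : ℕ =>
      (ucomp δ F (deltaStar δ q0 x) (n - x.length) : ℝ) / (vcomp δ F q0 n : ℝ)) =ᶠ[atTop]
      (fun n : ℕ => ∑ a : Γ,
      (ucomp δ F (deltaStar δ q0 (x ++ [a])) (n - (x ++ [a]).length) : ℝ) /
        (vcomp δ F q0 n : ℝ)) := by
    filter_upwards [eventually_ge_atTop (x.length + 1)] with n hn
    have hn' : n - x.length = (n - (x.length + 1)) + 1 := by omega
    rw [hn', ucomp_succ]
    rw [← Finset.sum_div]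
    push_cast
    congr 1
    refine Finset.sum_congr rfl fun a _ => ?_
    congr 2
    · rw [deltaStar_append]
      rfl
    · simp
  exact tendsto_nhds_unique ((hH2 x).congr' hev) h2

lemma rzero (L : Set (List Γ)) (hpc : pref L = L)
    (hL : L = {x | deltaStar δ q0 x ∈ F})
    (hH2 : ∀ x : List Γ,
      Tendsto (fun n : ℕ =>
          (ucomp δ F (deltaStar δ q0 x) (n - x.length) : ℝ) / (vcomp δ F q0 n : ℝ))
        atTop (𝓝 (r x)))
    {x : List Γ} (hx : x ∉ centre L) : r x = 0 := by
  set T : Set (List Γ) := {z | x ++ z ∈ L} with hT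
  have hclT : ∀ u v : List Γ, u <+: v → v ∈ T → u ∈ T := by
    intro u v huv hv
    obtain ⟨t, rfl⟩ := huv
    have : x ++ u <+: x ++ (u ++ t) := ⟨t, by simp⟩
    have : x ++ u ∈ pref L := ⟨x ++ (u ++ t), hv, this⟩
    rwa [hpc] at this
  by_cases hfin : T.Infinite
  · exfalso
    obtain ⟨w, hw⟩ := koenig hclT hfin
    set w' : ℕ → Γ := fun i => if h : i < x.length then x.get ⟨i, h⟩ else w (i - x.length) with hw'
    have key : ∀ m, prefixOf w' (x.length + m) = x ++ prefixOf w m := by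
      intro m
      rw [prefixOf, List.ofFn_add]
      congr 1
      · conv_rhs => rw [← List.ofFn_get x]
        refine congrArg _ (funext fun i => ?_)
        have : (Fin.castAdd m i : ℕ) < x.length := by simpa using i.isLt
        simp [hw', this]
      · refine congrArg _ (funext fun j => ?_)
        have h1 : ¬ ((Fin.natAdd x.length j : ℕ) < x.length) := by simp
        simp [hw', h1]
    have hadh : w' ∈ adh L := by
      intro ℓ
      have h1 : prefixOf w' ℓ <+: prefixOf w' (x.length + ℓ) := prefixOf_prefix w' (by omega)
      rw [key] at h1
      exact ⟨x ++ prefixOf w ℓ, hw ℓ, h1⟩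
    apply hx
    refine ⟨w', hadh, ?_⟩
    have := key 0
    simp only [Nat.add_zero] at this
    rw [this]
    simp [prefixOf]
  · rw [Set.not_infinite] at hfin
    obtain ⟨N, hN⟩ := (hfin.image List.length).bddAbove
    have hev : (fun n : ℕ =>
        (ucomp δ F (deltaStar δ q0 x) (n - x.length) : ℝ) / (vcomp δ F q0 n : ℝ)) =ᶠ[atTop]
        (fun _ => (0 : ℝ)) := by
      filter_upwards [eventually_ge_atTop (x.length + N + 1)] with n hn
      have hu : ucomp δ F (deltaStar δ q0 x) (n - x.length) = 0 := by
        rw [ucomp]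
        convert Set.ncard_empty (List Γ)
        ext z
        simp only [Set.mem_setOf_eq, Set.mem_empty_iff_false, iff_false, not_and]
        intro hlen hmem
        have hzT : z ∈ T := by
          rw [hT, Set.mem_setOf_eq, hL, Set.mem_setOf_eq, deltaStar_append]
          exact hmem
        have : z.length ≤ N := hN (Set.mem_image_of_mem _ hzT)
        omega
      rw [hu]
      simp
    exact tendsto_nhds_unique ((hH2 x).congr' hev) tendsto_const_nhds

lemma rmono (hH2 : ∀ x : List Γ,
      Tendsto (fun n : ℕ =>
          (ucomp δ F (deltaStar δ q0 x) (n - x.length) : ℝ) / (vcomp δ F q0 n : ℝ))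
        atTop (𝓝 (r x)))
    {u v : List Γ} (huv : u <+: v) : r v ≤ r u := by
  obtain ⟨t, rfl⟩ := huv
  induction t using List.reverseRecOn with
  | nil => simp
  | append_singleton t a ih =>
    have h1 : r ((u ++ t) ++ [a]) ≤ r (u ++ t) := by
      rw [radd hH2 (u ++ t)]
      exact Finset.single_le_sum (f := fun b => r ((u ++ t) ++ [b])) (fun b _ => rnonneg hH2 _)
        (Finset.mem_univ a)
    rw [← List.append_assoc] at *
    exact h1.trans ih

end RLemmas

section LexLemmas

variable {Γ : Type*} [LinearOrder Γ]

lemma lex_irrefl' (l : List Γ) : ¬ List.Lex (· < ·) l l := by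
  intro h
  induction l with
  | nil => cases h
  | cons a t ih =>
    cases h with
    | cons h => exact ih h
    | rel h => exact lt_irrefl _ h

lemma lex_cons_iff' {a b : Γ} {l₁ l₂ : List Γ} :
    List.Lex (· < ·) (a :: l₁) (b :: l₂) ↔ a < b ∨ (a = b ∧ List.Lex (· < ·) l₁ l₂) := by
  constructor
  · intro h
    cases h with
    | cons h => exact Or.inr ⟨rfl, h⟩
    | rel h => exact Or.inl h
  · rintro (h | ⟨rfl, h⟩)
    · exact List.Lex.rel h
    · exact List.Lex.cons h

lemma lex_append_singleton {u v : List Γ} (h : u.length = v.length) (b a : Γ) :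
    List.Lex (· < ·) (u ++ [b]) (v ++ [a]) ↔
      List.Lex (· < ·) u v ∨ (u = v ∧ b < a) := by
  induction u generalizing v with
  | nil =>
    cases v with
    | nil =>
      simp only [List.nil_append]
      rw [List.lex_singleton_iff]
      have h1 : ¬ List.Lex (· < ·) ([] : List Γ) [] := lex_irrefl' _
      tauto
    | cons d v' => simp at h
  | cons c u' ih =>
    cases v with
    | nil => simp at h
    | cons d v' =>
      simp only [List.cons_append]
      rw [lex_cons_iff', lex_cons_iff', ih (by simpa using h)]
      have : (c :: u' = d :: v') ↔ (c = d ∧ u' = v') := by simp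
      rw [this]
      tauto

end LexLemmas

section AlphaAux

variable {Γ : Type*} [Fintype Γ] [LinearOrder Γ]

open scoped Classical in
noncomputable def alphaAux (r : List Γ → ℝ) (n : ℕ) (y : List Γ) : ℝ :=
  (1 - r []) + ∑ f : Fin n → Γ,
    if List.Lex (· < ·) (List.ofFn f) y then r (List.ofFn f) else 0

lemma alphaFin_eq_aux (L : Set (List Γ)) (r : List Γ → ℝ)
    (hr0 : ∀ x : List Γ, x ∉ centre L → r x = 0) (y : List Γ) :
    alphaFin L r y = alphaAux r y.length y := by
  classical
  rw [alphaFin, alphaAux]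
  congr 1
  refine Finset.sum_congr rfl fun f _ => ?_
  by_cases h1 : List.ofFn f ∈ centre L
  · simp [h1]
  · simp [h1, hr0 _ h1]

lemma alphaAux_congr (r : List Γ → ℝ) {n m : ℕ} (h : n = m) (y : List Γ) :
    alphaAux r n y = alphaAux r m y := by subst h; rfl

lemma ofFn_snoc {n : ℕ} (f : Fin n → Γ) (b : Γ) :
    List.ofFn (Fin.snoc f b : Fin (n + 1) → Γ) = List.ofFn f ++ [b] := by
  rw [List.ofFn_succ', List.concat_eq_append]
  simp

open scoped Classical in
lemma alphaAux_append (r : List Γ → ℝ) (hradd : ∀ x, r x = ∑ a : Γ, r (x ++ [a]))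
    (y : List Γ) (a : Γ) :
    alphaAux r (y.length + 1) (y ++ [a]) =
      alphaAux r y.length y + ∑ b : Γ, if b < a then r (y ++ [b]) else 0 := by
  rw [alphaAux, alphaAux]
  have h1 : ∑ g : Fin (y.length + 1) → Γ,
      (if List.Lex (· < ·) (List.ofFn g) (y ++ [a]) then r (List.ofFn g) else 0)
      = ∑ p : Γ × (Fin y.length → Γ),
      (if List.Lex (· < ·) (List.ofFn p.2 ++ [p.1]) (y ++ [a]) then
        r (List.ofFn p.2 ++ [p.1]) else 0) := by
    refine (Fintype.sum_equiv (Fin.snocEquiv fun _ => Γ) _ _ fun p => ?_).symm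
    rw [show ((Fin.snocEquiv fun _ => Γ) p : Fin (y.length + 1) → Γ) = Fin.snoc p.2 p.1 from rfl,
      ofFn_snoc]
  rw [h1, Fintype.sum_prod_type]
  have h2 : ∀ (b : Γ) (f : Fin y.length → Γ),
      (if List.Lex (· < ·) (List.ofFn f ++ [b]) (y ++ [a]) then r (List.ofFn f ++ [b]) else 0)
      = (if List.Lex (· < ·) (List.ofFn f) y then r (List.ofFn f ++ [b]) else 0)
        + (if List.ofFn f = y ∧ b < a then r (List.ofFn f ++ [b]) else 0) := by
    intro b f
    rw [if_congr (lex_append_singleton (by simp : (List.ofFn f).length = y.length) b a) rfl rfl]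
    by_cases hP : List.Lex (· < ·) (List.ofFn f) y
    · have hQ : ¬ (List.ofFn f = y ∧ b < a) := by
        rintro ⟨hfy, -⟩
        rw [hfy] at hP
        exact lex_irrefl' _ hP
      simp [hP, hQ]
    · by_cases hQ : List.ofFn f = y ∧ b < a
      · obtain ⟨hfy, hba⟩ := hQ
        simp [hfy, hba, lex_irrefl' y]
      · simp [hP, hQ]
  simp only [h2, Finset.sum_add_distrib]
  have h3 : ∑ b : Γ, ∑ f : Fin y.length → Γ,
      (if List.Lex (· < ·) (List.ofFn f) y then r (List.ofFn f ++ [b]) else 0)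
      = ∑ f : Fin y.length → Γ,
        (if List.Lex (· < ·) (List.ofFn f) y then r (List.ofFn f) else 0) := by
    rw [Finset.sum_comm]
    refine Finset.sum_congr rfl fun f _ => ?_
    by_cases hP : List.Lex (· < ·) (List.ofFn f) y
    · simp only [hP, if_true, ← Finset.sum_ite_irrel]
      exact (hradd (List.ofFn f)).symm
    · simp [hP]
  have h4 : ∑ b : Γ, ∑ f : Fin y.length → Γ,
      (if List.ofFn f = y ∧ b < a then r (List.ofFn f ++ [b]) else 0)
      = ∑ b : Γ, if b < a then r (y ++ [b]) else 0 := by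
    refine Finset.sum_congr rfl fun b _ => ?_
    by_cases hb : b < a
    · simp only [hb, and_true, if_true]
      rw [Finset.sum_eq_single_of_mem y.get (Finset.mem_univ _)]
      · simp [List.ofFn_get]
      · intro f _ hf
        rw [if_neg]
        intro he
        exact hf (List.ofFn_injective (he.trans (List.ofFn_get y).symm))
    · simp [hb]
  rw [h3, h4]
  ring

end AlphaAux

section Bracket

open Filter Topology

variable {Γ : Type*} [Fintype Γ] [LinearOrder Γ] {r : List Γ → ℝ} {L : Set (List Γ)}

open scoped Classical in
lemma alphaFin_append (hr0 : ∀ x : List Γ, x ∉ centre L → r x = 0)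
    (hradd : ∀ x, r x = ∑ a : Γ, r (x ++ [a])) (y : List Γ) (a : Γ) :
    alphaFin L r (y ++ [a]) = alphaFin L r y + ∑ b : Γ, if b < a then r (y ++ [b]) else 0 := by
  rw [alphaFin_eq_aux L r hr0, alphaFin_eq_aux L r hr0,
    alphaAux_congr r (show (y ++ [a]).length = y.length + 1 by simp) (y ++ [a]),
    alphaAux_append r hradd y a]

lemma alphaFin_le_append (hr0 : ∀ x : List Γ, x ∉ centre L → r x = 0)
    (hradd : ∀ x, r x = ∑ a : Γ, r (x ++ [a])) (hrnn : ∀ x, 0 ≤ r x) (y : List Γ) (a : Γ) :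
    alphaFin L r y ≤ alphaFin L r (y ++ [a]) := by
  classical
  rw [alphaFin_append hr0 hradd]
  have h : (0:ℝ) ≤ ∑ b : Γ, if b < a then r (y ++ [b]) else 0 :=
    Finset.sum_nonneg fun b _ => by by_cases h : b < a <;> simp [h, hrnn _]
  linarith

lemma alphaFin_append_add_r_le (hr0 : ∀ x : List Γ, x ∉ centre L → r x = 0)
    (hradd : ∀ x, r x = ∑ a : Γ, r (x ++ [a])) (hrnn : ∀ x, 0 ≤ r x) (y : List Γ) (a : Γ) :
    alphaFin L r (y ++ [a]) + r (y ++ [a]) ≤ alphaFin L r y + r y := by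
  classical
  rw [alphaFin_append hr0 hradd]
  have key : (∑ b : Γ, if b < a then r (y ++ [b]) else 0) + r (y ++ [a]) ≤ r y := by
    conv_rhs => rw [hradd y]
    have h1 : r (y ++ [a]) = ∑ b : Γ, if b = a then r (y ++ [b]) else 0 := by
      rw [Finset.sum_ite_eq' Finset.univ a (fun b => r (y ++ [b]))]
      simp
    rw [h1, ← Finset.sum_add_distrib]
    refine Finset.sum_le_sum fun b _ => ?_
    by_cases hb : b < a
    · have hne : b ≠ a := ne_of_lt hb
      simp [hb, hne]
    · by_cases he : b = a
      · simp [hb, he]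
      · simp [hb, he, hrnn _]
  linarith

lemma bracket (hr0 : ∀ x : List Γ, x ∉ centre L → r x = 0)
    (hradd : ∀ x, r x = ∑ a : Γ, r (x ++ [a])) (hrnn : ∀ x, 0 ≤ r x) {w : ℕ → Γ}
    (hH3w : Tendsto (fun ℓ : ℕ => r (prefixOf w ℓ)) atTop (𝓝 0)) {aw : ℝ}
    (hlim : Tendsto (fun k : ℕ => alphaFin L r (prefixOf w k)) atTop (𝓝 aw)) (ℓ : ℕ) :
    alphaFin L r (prefixOf w ℓ) ≤ aw ∧ aw ≤ alphaFin L r (prefixOf w ℓ) + r (prefixOf w ℓ) := by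
  have hmono : Monotone (fun k : ℕ => alphaFin L r (prefixOf w k)) :=
    monotone_nat_of_le_succ fun k => by
      rw [prefixOf_succ]
      exact alphaFin_le_append hr0 hradd hrnn _ _
  have hanti : Antitone (fun k : ℕ => alphaFin L r (prefixOf w k) + r (prefixOf w k)) :=
    antitone_nat_of_succ_le fun k => by
      rw [prefixOf_succ]
      exact alphaFin_append_add_r_le hr0 hradd hrnn _ _
  refine ⟨hmono.ge_of_tendsto hlim ℓ, ?_⟩
  have h2 : Tendsto (fun k : ℕ => alphaFin L r (prefixOf w k) + r (prefixOf w k)) atTop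
      (𝓝 (aw + 0)) := hlim.add hH3w
  rw [add_zero] at h2
  exact hanti.le_of_tendsto h2 ℓ

end Bracket


theorem stmt_16 {Γ : Type*} [Fintype Γ] [LinearOrder Γ]
    (L : Set (List Γ)) (hLinf : L.Infinite) (hpc : pref L = L)
    {Q : Type*} (q0 : Q) (δ : Q → Γ → Q) (F : Set Q)
    (hacc : ∀ q : Q, ∃ x : List Γ, deltaStar δ q0 x = q)
    (hL : L = {x | deltaStar δ q0 x ∈ F})
    (r : List Γ → ℝ)
    (hH2 : ∀ x : List Γ,
      Tendsto (fun n : ℕ =>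
          (ucomp δ F (deltaStar δ q0 x) (n - x.length) : ℝ) / (vcomp δ F q0 n : ℝ))
        atTop (𝓝 (r x)))
    (hH3 : ∀ w ∈ adh L, Tendsto (fun ℓ : ℕ => r (prefixOf w ℓ)) atTop (𝓝 0)) :
    ∀ ε : ℝ, 0 < ε → ∃ ℓ : ℕ,
      ∀ w ∈ adh L, ∀ z ∈ adh L, ∀ aw az : ℝ,
        Tendsto (fun k : ℕ => alphaFin L r (prefixOf w k)) atTop (𝓝 aw) →
        Tendsto (fun k : ℕ => alphaFin L r (prefixOf z k)) atTop (𝓝 az) →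
        (∀ i < ℓ, w i = z i) → |aw - az| ≤ ε := by
  intro ε hε
  have hrnn : ∀ x : List Γ, 0 ≤ r x := rnonneg hH2
  have hradd : ∀ x : List Γ, r x = ∑ a : Γ, r (x ++ [a]) := radd hH2
  have hr0 : ∀ x : List Γ, x ∉ centre L → r x = 0 := fun x hx => rzero L hpc hL hH2 hx
  have hfin : {y : List Γ | y ∈ centre L ∧ ε < r y}.Finite := by
    by_contra hinf
    have hclT : ∀ u v : List Γ, u <+: v → v ∈ {y : List Γ | y ∈ centre L ∧ ε < r y} →
        u ∈ {y : List Γ | y ∈ centre L ∧ ε < r y} := by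
      rintro u v huv ⟨hvc, hvr⟩
      exact ⟨centre_prefix_closed huv hvc, lt_of_lt_of_le hvr (rmono hH2 huv)⟩
    obtain ⟨w, hw⟩ := koenig hclT hinf
    have hwadh : w ∈ adh L := fun ℓ => centre_subset_pref (hw ℓ).1
    have hle : ε ≤ 0 := ge_of_tendsto' (hH3 w hwadh) fun ℓ => (hw ℓ).2.le
    linarith
  obtain ⟨N, hN⟩ := (hfin.image List.length).bddAbove
  refine ⟨N + 1, ?_⟩
  intro w hw z hz aw az hlw hlz hagree
  have hpre : prefixOf w (N + 1) = prefixOf z (N + 1) := by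
    unfold prefixOf
    congr 1
    funext i
    exact hagree i.val i.isLt
  have hyc : prefixOf w (N + 1) ∈ centre L := prefixOf_mem_centre hw _
  have hry : r (prefixOf w (N + 1)) ≤ ε := by
    by_contra hc
    push_neg at hc
    have hmem : prefixOf w (N + 1) ∈ {y : List Γ | y ∈ centre L ∧ ε < r y} := ⟨hyc, hc⟩
    have hlen := hN (Set.mem_image_of_mem List.length hmem)
    rw [length_prefixOf] at hlen
    omega
  obtain ⟨h1w, h2w⟩ := bracket hr0 hradd hrnn (hH3 w hw) hlw (N + 1)
  obtain ⟨h1z, h2z⟩ := bracket hr0 hradd hrnn (hH3 z hz) hlz (N + 1)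
  rw [← hpre] at h1z h2z
  rw [abs_sub_le_iff]
  constructor <;> linarith
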